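/- arXiv:1904.06019 — 3 statements merged into one kernel-verified Lean document; each statement's English description precedes it below -/
import Mathlib

section
/- If V_1, ..., V_{n+1} are exchangeable real-valued random variables, then for any β ∈ (0,1), the probability that V_{n+1} ≤ Quantile(β; empirical distribution of {V_1,...,V_n} ∪ {∞}) is at least β. -/
open MeasureTheory Set

/-- Level-β quantile of a measure on the extended reals. -/
noncomputable def quantileE (β : ℝ) (F : Measure EReal) : EReal :=
  sInf {z : EReal | ENNReal.ofReal β ≤ F (Set.Iic z)}

/-- Weighted discrete measure on the extended reals, with weights `p` on atoms `v`. -/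
noncomputable def wEmp {m : ℕ} (p : Fin m → ℝ) (v : Fin m → EReal) : Measure EReal :=
  ∑ i, ENNReal.ofReal (p i) • Measure.dirac (v i)

/-- Empirical (uniform) measure on the atoms `v`. -/
noncomputable def empE {m : ℕ} (v : Fin m → EReal) : Measure EReal :=
  wEmp (fun _ => 1 / m) v

lemma comb_aux {m : ℕ} (x : Fin m → ℝ) (k : ℕ) (hk : k ≤ m) :
    k ≤ (Finset.univ.filter fun j =>
      (Finset.univ.filter fun i => x i < x j).card < k).card := by
  by_cases hB : (Finset.univ.filter fun j : Fin m =>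
      k ≤ (Finset.univ.filter fun i => x i < x j).card).Nonempty
  · obtain ⟨j, hjB, hjmin⟩ := Finset.exists_min_image _ x hB
    rw [Finset.mem_filter] at hjB
    calc k ≤ (Finset.univ.filter fun i => x i < x j).card := hjB.2
      _ ≤ _ := by
        apply Finset.card_le_card
        intro i hi
        rw [Finset.mem_filter] at hi ⊢
        refine ⟨Finset.mem_univ _, ?_⟩
        by_contra h
        push_neg at h
        exact absurd hi.2 (not_lt.2 (hjmin i (Finset.mem_filter.2 ⟨Finset.mem_univ _, h⟩)))
  · rw [Finset.not_nonempty_iff_eq_empty, Finset.filter_eq_empty_iff] at hB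
    have : (Finset.univ.filter fun j : Fin m =>
        (Finset.univ.filter fun i => x i < x j).card < k) = Finset.univ := by
      apply Finset.filter_true_of_mem
      intro j hj
      exact lt_of_not_ge (hB hj)
    rw [this, Finset.card_univ, Fintype.card_fin]
    exact hk

lemma empE_Iic {m : ℕ} (v : Fin m → EReal) (z : EReal) :
    empE v (Iic z) = ENNReal.ofReal (1/m) *
      ((Finset.univ.filter fun i => v i ≤ z).card : ENNReal) := by
  rw [empE, wEmp, Measure.finset_sum_apply]
  rw [Finset.card_filter]
  push_cast
  rw [Finset.mul_sum]
  congr 1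
  ext i
  rw [Pi.smul_apply, Measure.dirac_apply' _ measurableSet_Iic]
  simp only [smul_eq_mul, Set.indicator_apply, Set.mem_Iic, Pi.one_apply]

lemma ofReal_le_empE_iff {m : ℕ} (hm : 0 < m) (v : Fin m → EReal) (z : EReal) (β : ℝ) :
    ENNReal.ofReal β ≤ empE v (Iic z) ↔
      β * m ≤ ((Finset.univ.filter fun i => v i ≤ z).card : ℝ) := by
  have hmR : (0:ℝ) < m := by exact_mod_cast hm
  rw [empE_Iic]
  set N := (Finset.univ.filter fun i => v i ≤ z).card
  have : ENNReal.ofReal (1/m) * (N : ENNReal) = ENNReal.ofReal ((N : ℝ) / m) := by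
    rw [one_div, ENNReal.ofReal_inv_of_pos hmR, div_eq_mul_inv,
      ENNReal.ofReal_mul (Nat.cast_nonneg N), ENNReal.ofReal_natCast,
      ENNReal.ofReal_inv_of_pos hmR, mul_comm]
    simp [ENNReal.ofReal_natCast]
  rw [this, ENNReal.ofReal_le_ofReal_iff (by positivity), le_div_iff₀ hmR]

lemma le_quantile_iff {n : ℕ} (x : Fin n → ℝ) (w : ℝ) (β : ℝ) (hβ0 : 0 < β) :
    ((w : EReal) ≤ quantileE β (empE (Fin.snoc (fun i => ((x i : ℝ) : EReal)) ⊤)))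
      ↔ ((Finset.univ.filter fun i => x i < w).card : ℝ) < β * (n + 1) := by
  set u : Fin (n+1) → EReal := Fin.snoc (fun i => ((x i : ℝ) : EReal)) ⊤ with hu
  have hmem : ∀ z : EReal, (ENNReal.ofReal β ≤ empE u (Iic z)) ↔
      β * (n+1) ≤ ((Finset.univ.filter fun i => u i ≤ z).card : ℝ) := by
    intro z
    rw [ofReal_le_empE_iff (Nat.succ_pos n)]
    push_cast
    rfl
  constructor
  · intro hw
    by_contra hcon
    push_neg at hcon
    by_cases hne : (Finset.univ.filter fun i => x i < w).Nonempty
    · set s := (Finset.univ.filter fun i => x i < w) with hs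
      have hsne : (s.image x).Nonempty := hne.image x
      set z0 := (s.image x).max' hsne with hz0
      have hz0w : z0 < w := by
        obtain ⟨i, hi, hxi⟩ := Finset.mem_image.1 ((s.image x).max'_mem hsne)
        rw [hz0, ← hxi]
        exact (Finset.mem_filter.1 hi).2
      have hcard : s.card ≤ (Finset.univ.filter fun i => u i ≤ (z0 : EReal)).card := by
        apply Finset.card_le_card_of_injOn Fin.castSucc
        · intro i hi
          rw [Finset.mem_coe, Finset.mem_filter]
          refine ⟨Finset.mem_univ _, ?_⟩
          have : u i.castSucc = ((x i : ℝ) : EReal) := Fin.snoc_castSucc _ _ _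
          rw [this, EReal.coe_le_coe_iff]
          exact Finset.le_max' _ _ (Finset.mem_image_of_mem x hi)
        · exact fun a _ b _ h => Fin.castSucc_injective _ h
      have hzS : ENNReal.ofReal β ≤ empE u (Iic (z0 : EReal)) := by
        rw [hmem]
        exact le_trans hcon (by exact_mod_cast hcard)
      have hQ : quantileE β (empE u) ≤ (z0 : EReal) := sInf_le hzS
      exact absurd (hw.trans hQ) (not_le.2 (EReal.coe_lt_coe_iff.2 hz0w))
    · rw [Finset.not_nonempty_iff_eq_empty] at hne
      rw [hne] at hcon
      simp at hcon
      nlinarith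
  · intro hlt
    refine le_sInf ?_
    intro z hz
    rw [Set.mem_setOf_eq, hmem] at hz
    by_contra hzw
    push_neg at hzw
    have hcount : ((Finset.univ.filter fun i => u i ≤ z).card : ℝ)
        ≤ ((Finset.univ.filter fun i => x i < w).card : ℝ) := by
      have : (Finset.univ.filter fun i => u i ≤ z).card
          ≤ (Finset.univ.filter fun i => x i < w).card := by
        rw [Finset.card_filter, Finset.card_filter, Fin.sum_univ_castSucc]
        simp only [hu, Fin.snoc_castSucc, Fin.snoc_last]
        have h2 : (if (⊤:EReal) ≤ z then 1 else 0) = 0 := by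
          rw [if_neg]
          intro h
          rw [top_le_iff] at h
          rw [h] at hzw
          exact absurd hzw (by simp)
        rw [h2, add_zero]
        apply Finset.sum_le_sum
        intro i _
        split_ifs with h1 h2
        · rfl
        · exact absurd (EReal.coe_lt_coe_iff.1 (lt_of_le_of_lt h1 hzw)) h2
        · exact Nat.zero_le _
        · rfl
      exact_mod_cast this
    linarith

theorem stmt0 {Ω : Type*} [MeasurableSpace Ω] (P : Measure Ω) [IsProbabilityMeasure P]
    (n : ℕ) (V : Fin (n + 1) → Ω → ℝ) (hmeas : ∀ i, Measurable (V i))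
    (hexch : ∀ σ : Equiv.Perm (Fin (n + 1)),
      Measure.map (fun ω i => V (σ i) ω) P = Measure.map (fun ω i => V i ω) P)
    (β : ℝ) (hβ : β ∈ Set.Ioo (0 : ℝ) 1) :
    ENNReal.ofReal β ≤
      P {ω | (V (Fin.last n) ω : EReal) ≤
        quantileE β (empE (Fin.snoc (fun i : Fin n => ((V i.castSucc ω : ℝ) : EReal)) ⊤))} := by
  classical
  obtain ⟨hβ0, hβ1⟩ := hβ
  set c : ℝ := β * ((n:ℝ) + 1) with hc
  have hc0 : 0 < c := by positivity
  set k : ℕ := ⌈c⌉₊ with hk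
  have hk1 : k ≤ n + 1 := by
    rw [hk, Nat.ceil_le]
    push_cast
    nlinarith
  -- the counting function on path space
  set L : Fin (n+1) → (Fin (n+1) → ℝ) → ℕ :=
    fun j y => (Finset.univ.filter fun i => y i < y j).card with hL
  have hLmeas : ∀ j, Measurable (L j) := by
    intro j
    simp only [hL, Finset.card_filter]
    apply Finset.measurable_sum
    intro i _
    exact Measurable.ite (measurableSet_lt (measurable_pi_apply i) (measurable_pi_apply j))
      measurable_const measurable_const
  set S : Fin (n+1) → Set (Fin (n+1) → ℝ) := fun j => {y | L j y < k} with hS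
  have hSmeas : ∀ j, MeasurableSet (S j) := by
    intro j
    exact (hLmeas j) (by trivial : MeasurableSet (Set.Iio k))
  have hVmeas : Measurable (fun ω (i : Fin (n+1)) => V i ω) :=
    measurable_pi_lambda _ hmeas
  set A : Fin (n+1) → Set Ω := fun j => (fun ω i => V i ω) ⁻¹' (S j) with hA
  have hAmeas : ∀ j, MeasurableSet (A j) := fun j => hVmeas (hSmeas j)
  -- all A j have the same probability
  have hPA : ∀ j, P (A j) = P (A (Fin.last n)) := by
    intro j
    set σ : Equiv.Perm (Fin (n+1)) := Equiv.swap j (Fin.last n) with hσ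
    have hmap2 : Measurable (fun ω (i : Fin (n+1)) => V (σ i) ω) :=
      measurable_pi_lambda _ (fun i => hmeas _)
    have h1 : P (A j) = (Measure.map (fun ω i => V i ω) P) (S j) :=
      (Measure.map_apply hVmeas (hSmeas j)).symm
    rw [← hexch σ, Measure.map_apply hmap2 (hSmeas j)] at h1
    rw [h1]
    congr 1
    ext ω
    simp only [Set.mem_preimage, hS, Set.mem_setOf_eq, hA]
    have hcard : L j (fun i => V (σ i) ω) = L (Fin.last n) (fun i => V i ω) := by
      simp only [hL]
      have hσj : σ j = Fin.last n := Equiv.swap_apply_left _ _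
      simp only [hσj]
      apply Finset.card_bij (fun i _ => σ i)
      · intro a ha
        rw [Finset.mem_filter] at ha ⊢
        exact ⟨Finset.mem_univ _, ha.2⟩
      · intro a _ b _ h
        exact σ.injective h
      · intro b hb
        refine ⟨σ.symm b, ?_, by simp⟩
        rw [Finset.mem_filter] at hb ⊢
        refine ⟨Finset.mem_univ _, ?_⟩
        simpa [hσj] using hb.2
    rw [hcard]
  -- pointwise counting bound
  have hptwise : ∀ ω, (k : ENNReal) ≤ ∑ j, (A j).indicator (1 : Ω → ENNReal) ω := by
    intro ω
    have hcomb := comb_aux (fun i => V i ω) k hk1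
    have : ∑ j, (A j).indicator (1 : Ω → ENNReal) ω
        = ((Finset.univ.filter fun j => ω ∈ A j).card : ENNReal) := by
      rw [Finset.card_filter]
      push_cast
      apply Finset.sum_congr rfl
      intro j _
      by_cases hj : ω ∈ A j <;> simp [hj]
    rw [this]
    have heq : (Finset.univ.filter fun j => ω ∈ A j)
        = (Finset.univ.filter fun j =>
            (Finset.univ.filter fun i => V i ω < V j ω).card < k) := by
      apply Finset.filter_congr
      intro j _
      simp only [hA, Set.mem_preimage, hS, Set.mem_setOf_eq, hL]
    rw [heq]
    exact_mod_cast hcomb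
  -- integrate
  have hsum : (k : ENNReal) ≤ ∑ j, P (A j) := by
    calc (k : ENNReal) = ∫⁻ _, (k : ENNReal) ∂P := by
          rw [lintegral_const, measure_univ, mul_one]
      _ ≤ ∫⁻ ω, ∑ j, (A j).indicator (1 : Ω → ENNReal) ω ∂P := lintegral_mono hptwise
      _ = ∑ j, ∫⁻ ω, (A j).indicator (1 : Ω → ENNReal) ω ∂P := by
          apply lintegral_finset_sum
          exact fun j _ => measurable_one.indicator (hAmeas j)
      _ = ∑ j, P (A j) := by
          apply Finset.sum_congr rfl
          intro j _
          rw [lintegral_indicator_one (hAmeas j)]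
  have hsum2 : (k : ENNReal) ≤ ((n:ENNReal) + 1) * P (A (Fin.last n)) := by
    calc (k : ENNReal) ≤ ∑ j, P (A j) := hsum
      _ = ∑ _j : Fin (n+1), P (A (Fin.last n)) := Finset.sum_congr rfl (fun j _ => hPA j)
      _ = ((n:ENNReal) + 1) * P (A (Fin.last n)) := by
          rw [Finset.sum_const, Finset.card_univ, Fintype.card_fin, nsmul_eq_mul]
          push_cast
          ring
  -- conclude ofReal β ≤ P (A last)
  have hfinal : ENNReal.ofReal β ≤ P (A (Fin.last n)) := by
    have h1 : ENNReal.ofReal β * ((n:ENNReal) + 1) ≤ P (A (Fin.last n)) * ((n:ENNReal) + 1) := by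
      have hlhs : ENNReal.ofReal β * ((n:ENNReal) + 1) = ENNReal.ofReal c := by
        rw [hc, ENNReal.ofReal_mul (le_of_lt hβ0)]
        congr 1
        rw [ENNReal.ofReal_add (by positivity) zero_le_one]
        simp [ENNReal.ofReal_natCast]
      have hck : ENNReal.ofReal c ≤ (k : ENNReal) := by
        rw [← ENNReal.ofReal_natCast k]
        exact ENNReal.ofReal_le_ofReal (Nat.le_ceil c)
      rw [hlhs, mul_comm (P _)]
      exact le_trans (le_trans hck hsum2) le_rfl
    exact (ENNReal.mul_le_mul_iff_left (by simp) (by simp)).1 h1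
  -- identify the target set with A last
  have hset : {ω | (V (Fin.last n) ω : EReal) ≤
      quantileE β (empE (Fin.snoc (fun i : Fin n => ((V i.castSucc ω : ℝ) : EReal)) ⊤))}
      = A (Fin.last n) := by
    ext ω
    simp only [Set.mem_setOf_eq, hA, Set.mem_preimage, hS, Set.mem_setOf_eq, hL]
    rw [le_quantile_iff (fun i => V i.castSucc ω) (V (Fin.last n) ω) β hβ0]
    have hLcount : (Finset.univ.filter fun i : Fin (n+1) => V i ω < V (Fin.last n) ω).card
        = (Finset.univ.filter fun i : Fin n => V i.castSucc ω < V (Fin.last n) ω).card := by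
      rw [Finset.card_filter, Finset.card_filter, Fin.sum_univ_castSucc]
      simp
    rw [hLcount]
    constructor
    · intro h
      rw [Nat.lt_ceil]
      exact h
    · intro h
      rw [Nat.lt_ceil] at h
      exact h
  rw [hset]
  exact hfinal
end

section
/- If V_1, ..., V_{n+1} are exchangeable real-valued random variables such that ties among V_1,...,V_{n+1} occur with probability zero, then for any β ∈ (0,1), the probability that V_{n+1} ≤ Quantile(β; {V_1,...,V_n} ∪ {∞}) is at most β + 1/(n+1). -/
open MeasureTheory Set

section Helpers

open Finset
open scoped ENNReal Classical

/-- rank of index `j` among the values `x`. -/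
noncomputable def rnk {m : ℕ} (x : Fin m → ℝ) (j : Fin m) : ℕ :=
  (Finset.univ.filter (fun i => x i ≤ x j)).card

lemma rnk_lt {m : ℕ} {x : Fin m → ℝ} {a b : Fin m} (h : x a < x b) : rnk x a < rnk x b := by
  apply Finset.card_lt_card
  rw [Finset.ssubset_iff_of_subset]
  · exact ⟨b, by simp, by simp [not_le.2 h]⟩
  · intro i hi
    simp only [Finset.mem_filter, Finset.mem_univ, true_and] at hi ⊢
    exact hi.trans h.le

lemma rnk_inj {m : ℕ} {x : Fin m → ℝ} (hx : Function.Injective x) :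
    Function.Injective (rnk x) := by
  intro a b hab
  rcases lt_trichotomy (x a) (x b) with h | h | h
  · exact absurd hab (rnk_lt h).ne
  · exact hx h
  · exact absurd hab.symm (rnk_lt h).ne

lemma one_le_rnk {m : ℕ} (x : Fin m → ℝ) (j : Fin m) : 1 ≤ rnk x j :=
  Finset.card_pos.2 ⟨j, by simp [le_refl]⟩

lemma card_rnk_le {m k : ℕ} {x : Fin m → ℝ} (hx : Function.Injective x) :
    (Finset.univ.filter (fun j => rnk x j ≤ k)).card ≤ k := by
  calc (Finset.univ.filter (fun j => rnk x j ≤ k)).card ≤ (Finset.Icc 1 k).card :=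
        Finset.card_le_card_of_injOn (rnk x)
          (fun a ha => by
            simp only [Finset.mem_coe, Finset.mem_filter] at ha
            exact Finset.mem_Icc.2 ⟨one_le_rnk x a, ha.2⟩)
          ((rnk_inj hx).injOn)
    _ = k := by rw [Nat.card_Icc]; omega

lemma rnk_perm {m : ℕ} (x : Fin m → ℝ) (σ : Equiv.Perm (Fin m)) (j : Fin m) :
    rnk (fun i => x (σ i)) j = rnk x (σ j) := by
  unfold rnk
  exact Finset.card_equiv σ (fun i => by simp)

lemma empE_apply {m : ℕ} (v : Fin m → EReal) (z : EReal) :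
    empE v (Set.Iic z) =
      ENNReal.ofReal (1 / m) * ((Finset.univ.filter (fun i => v i ≤ z)).card : ℝ≥0∞) := by
  unfold empE wEmp
  rw [Measure.finset_sum_apply]
  have : ∀ i : Fin m, (ENNReal.ofReal ((fun _ : Fin m => 1 / (m:ℝ)) i) • Measure.dirac (v i))
      (Set.Iic z) = ENNReal.ofReal (1/(m:ℝ)) * (if v i ≤ z then 1 else 0) := by
    intro i
    rw [Measure.smul_apply, Measure.dirac_apply' _ measurableSet_Iic]
    simp [Set.indicator_apply, Set.mem_Iic]
  simp_rw [this, ← Finset.mul_sum, Finset.sum_boole]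

lemma quantile_mem_iff {n : ℕ} (β : ℝ) (v : Fin (n+1) → EReal) (z : EReal) :
    ENNReal.ofReal β ≤ empE v (Set.Iic z) ↔
      ⌈β * (n+1)⌉₊ ≤ (Finset.univ.filter (fun i => v i ≤ z)).card := by
  rw [empE_apply]
  have h1 : ((Finset.univ.filter (fun i => v i ≤ z)).card : ℝ≥0∞)
      = ENNReal.ofReal ((Finset.univ.filter (fun i => v i ≤ z)).card : ℝ) := by
    simp
  rw [h1, ← ENNReal.ofReal_mul (by positivity),
    ENNReal.ofReal_le_ofReal_iff (by positivity), Nat.ceil_le]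
  rw [one_div, inv_mul_eq_div, le_div_iff₀ (by positivity)]
  push_cast
  ring_nf

lemma card_snoc {n : ℕ} (v : Fin n → ℝ) (z : EReal) :
    ((Finset.univ : Finset (Fin (n+1))).filter
        (fun i => (Fin.snoc (fun j : Fin n => ((v j : ℝ) : EReal)) (⊤ : EReal) : Fin (n+1) → EReal) i ≤ z)).card
      = (Finset.univ.filter (fun j : Fin n => ((v j : ℝ) : EReal) ≤ z)).card
        + (if (⊤ : EReal) ≤ z then 1 else 0) := by
  rw [Finset.card_filter, Fin.sum_univ_castSucc, Finset.card_filter]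
  simp only [Fin.snoc_castSucc, Fin.snoc_last]

lemma sInf_lt {n : ℕ} (v : Fin n → ℝ) (t : ℝ) (k : ℕ) (hk : 1 ≤ k)
    (hd : ∀ j, v j ≠ t)
    (hc : k ≤ (Finset.univ.filter (fun j => v j ≤ t)).card) :
    sInf {z : EReal | k ≤ ((Finset.univ : Finset (Fin (n+1))).filter
        (fun i => (Fin.snoc (fun j : Fin n => ((v j : ℝ) : EReal)) (⊤ : EReal) : Fin (n+1) → EReal) i ≤ z)).card}
      < (t : EReal) := by
  set T := Finset.univ.filter (fun j => v j ≤ t) with hT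
  have hTne : (T.image v).Nonempty := by
    refine (Finset.image_nonempty).2 (Finset.card_pos.1 ?_)
    omega
  set z := (T.image v).max' hTne with hz
  have hzt : z < t := by
    rw [hz, Finset.max'_lt_iff]
    rintro y hy
    rcases Finset.mem_image.1 hy with ⟨j, hj, rfl⟩
    rw [hT, Finset.mem_filter] at hj
    exact lt_of_le_of_ne hj.2 (hd j)
  have hzS : k ≤ ((Finset.univ : Finset (Fin (n+1))).filter
      (fun i => (Fin.snoc (fun j : Fin n => ((v j : ℝ) : EReal)) (⊤ : EReal) : Fin (n+1) → EReal) i ≤ (z : EReal))).card := by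
    rw [card_snoc]
    have hsub : T ⊆ Finset.univ.filter (fun j : Fin n => ((v j : ℝ) : EReal) ≤ (z:EReal)) := by
      intro j hj
      simp only [Finset.mem_filter, Finset.mem_univ, true_and, EReal.coe_le_coe_iff]
      exact Finset.le_max' _ _ (Finset.mem_image_of_mem v hj)
    have := Finset.card_le_card hsub
    omega
  calc sInf _ ≤ (z : EReal) := csInf_le (OrderBot.bddBelow _) hzS
    _ < (t : EReal) := by exact_mod_cast hzt

end Helpers

open scoped ENNReal in
theorem stmt1 {Ω : Type*} [MeasurableSpace Ω] (P : Measure Ω) [IsProbabilityMeasure P]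
    (n : ℕ) (V : Fin (n + 1) → Ω → ℝ) (hmeas : ∀ i, Measurable (V i))
    (hexch : ∀ σ : Equiv.Perm (Fin (n + 1)),
      Measure.map (fun ω i => V (σ i) ω) P = Measure.map (fun ω i => V i ω) P)
    (hties : P {ω | ∃ i j, i ≠ j ∧ V i ω = V j ω} = 0)
    (β : ℝ) (hβ : β ∈ Set.Ioo (0 : ℝ) 1) :
    P {ω | (V (Fin.last n) ω : EReal) ≤
        quantileE β (empE (Fin.snoc (fun i : Fin n => ((V i.castSucc ω : ℝ) : EReal)) ⊤))}
      ≤ ENNReal.ofReal (β + 1 / (n + 1)) := by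
  classical
  obtain ⟨hβ0, hβ1⟩ := hβ
  set k := ⌈β * ((n:ℝ)+1)⌉₊ with hkdef
  have hk1 : 1 ≤ k := Nat.one_le_iff_ne_zero.2 (by
    simp only [hkdef, ne_eq, Nat.ceil_eq_zero, not_le]
    positivity)
  have hJ : Measurable (fun ω i => V i ω) := measurable_pi_lambda _ hmeas
  set J : Ω → (Fin (n+1) → ℝ) := fun ω i => V i ω with hJdef
  set μ := P.map J with hμ
  have hμprob : IsProbabilityMeasure μ := Measure.isProbabilityMeasure_map hJ.aemeasurable
  set A : Fin (n+1) → Set (Fin (n+1) → ℝ) := fun j => {x | rnk x j ≤ k} with hA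
  have hrmeas : ∀ j, Measurable (fun x : Fin (n+1) → ℝ => rnk x j) := by
    intro j
    unfold rnk
    simp_rw [Finset.card_filter]
    apply Finset.measurable_sum
    intro i _
    exact Measurable.ite
      (measurableSet_le (measurable_pi_apply i) (measurable_pi_apply j))
      measurable_const measurable_const
  have hAmeas : ∀ j, MeasurableSet (A j) := fun j => hrmeas j measurableSet_Iic
  -- exchangeability : all A j have the same measure
  have hAeq : ∀ j, μ (A j) = μ (A (Fin.last n)) := by
    intro j
    set σ := Equiv.swap j (Fin.last n) with hσ
    have hperm : Measurable (fun x : Fin (n+1) → ℝ => fun i => x (σ i)) :=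
      measurable_pi_lambda _ (fun i => measurable_pi_apply (σ i))
    have hmap : μ.map (fun x : Fin (n+1) → ℝ => fun i => x (σ i)) = μ := by
      rw [hμ, Measure.map_map hperm hJ]
      exact hexch σ
    have h1 : μ (A (Fin.last n))
        = μ ((fun x : Fin (n+1) → ℝ => fun i => x (σ i)) ⁻¹' A (Fin.last n)) := by
      conv_lhs => rw [← hmap]
      rw [Measure.map_apply hperm (hAmeas _)]
    rw [h1]
    congr 1
    ext x
    simp only [hA, Set.mem_preimage, Set.mem_setOf_eq]
    rw [rnk_perm x σ (Fin.last n), hσ, Equiv.swap_apply_right]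
  -- ties are null
  set N : Set (Fin (n+1) → ℝ) := {x | ∃ i j, i ≠ j ∧ x i = x j} with hN
  have hNmeas : MeasurableSet N := by
    have : N = ⋃ i, ⋃ j, ⋃ (_ : i ≠ j), {x : Fin (n+1) → ℝ | x i = x j} := by
      ext x; simp [hN]
    rw [this]
    exact MeasurableSet.iUnion fun i => MeasurableSet.iUnion fun j =>
      MeasurableSet.iUnion fun _ =>
        measurableSet_eq_fun (measurable_pi_apply i) (measurable_pi_apply j)
  have hN0 : μ N = 0 := by
    rw [hμ, Measure.map_apply hJ hNmeas]
    exact hties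
  have hae : ∀ᵐ x ∂μ, x ∉ N := by
    rw [ae_iff]
    simpa using hN0
  -- sum bound
  have hsum : ∑ j : Fin (n+1), μ (A j) ≤ (k : ℝ≥0∞) := by
    have h1 : ∑ j : Fin (n+1), μ (A j)
        = ∫⁻ x, ∑ j, Set.indicator (A j) (1 : (Fin (n+1) → ℝ) → ℝ≥0∞) x ∂μ := by
      rw [lintegral_finset_sum _ (fun j _ => (measurable_one.indicator (hAmeas j)))]
      simp_rw [lintegral_indicator_one (hAmeas _)]
    rw [h1]
    have h2 : ∀ᵐ x ∂μ, ∑ j, Set.indicator (A j) (1 : (Fin (n+1) → ℝ) → ℝ≥0∞) x ≤ (k : ℝ≥0∞) := by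
      filter_upwards [hae] with x hx
      have hinj : Function.Injective x := by
        intro a b hab
        by_contra hne
        exact hx ⟨a, b, hne, hab⟩
      have heq : ∑ j, Set.indicator (A j) (1 : (Fin (n+1) → ℝ) → ℝ≥0∞) x
          = ((Finset.univ.filter (fun j => rnk x j ≤ k)).card : ℝ≥0∞) := by
        simp_rw [Set.indicator_apply]
        rw [← Finset.sum_boole]
        rfl
      rw [heq]
      exact_mod_cast card_rnk_le hinj
    calc ∫⁻ x, ∑ j, Set.indicator (A j) (1 : (Fin (n+1) → ℝ) → ℝ≥0∞) x ∂μ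
        ≤ ∫⁻ _, (k:ℝ≥0∞) ∂μ := lintegral_mono_ae h2
      _ = (k:ℝ≥0∞) := by simp [lintegral_const, measure_univ]
  have hmain : μ (A (Fin.last n)) * (n+1) ≤ (k : ℝ≥0∞) := by
    calc μ (A (Fin.last n)) * (n+1) = ∑ _j : Fin (n+1), μ (A (Fin.last n)) := by
          simp [Finset.sum_const, mul_comm]
      _ = ∑ j, μ (A j) := Finset.sum_congr rfl (fun j _ => (hAeq j).symm)
      _ ≤ (k : ℝ≥0∞) := hsum
  -- event inclusion
  have hEsub : {ω | (V (Fin.last n) ω : EReal) ≤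
        quantileE β (empE (Fin.snoc (fun i : Fin n => ((V i.castSucc ω : ℝ) : EReal)) ⊤))}
      ⊆ J ⁻¹' (A (Fin.last n)) ∪ J ⁻¹' N := by
    intro ω hω
    by_cases hωN : J ω ∈ N
    · exact Or.inr hωN
    left
    set t := V (Fin.last n) ω with ht
    set v : Fin n → ℝ := fun i => V i.castSucc ω with hv
    have hd : ∀ j, v j ≠ t := by
      intro j h
      exact hωN ⟨j.castSucc, Fin.last n, (Fin.castSucc_lt_last j).ne, h⟩
    have hq : quantileE β (empE (Fin.snoc (fun i : Fin n => ((v i : ℝ) : EReal)) (⊤:EReal)))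
        = sInf {z : EReal | k ≤ ((Finset.univ : Finset (Fin (n+1))).filter
            (fun i => (Fin.snoc (fun j : Fin n => ((v j : ℝ) : EReal)) (⊤ : EReal) : Fin (n+1) → EReal) i ≤ z)).card} := by
      unfold quantileE
      congr 1
      ext z
      rw [Set.mem_setOf_eq, quantile_mem_iff β _ z]
      rfl
    have hω' : (t : EReal) ≤ sInf {z : EReal | k ≤ ((Finset.univ : Finset (Fin (n+1))).filter
        (fun i => (Fin.snoc (fun j : Fin n => ((v j : ℝ) : EReal)) (⊤ : EReal) : Fin (n+1) → EReal) i ≤ z)).card} := by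
      rw [← hq]
      exact hω
    show rnk (J ω) (Fin.last n) ≤ k
    by_contra hrk
    push_neg at hrk
    have hsplit : rnk (J ω) (Fin.last n)
        = (Finset.univ.filter (fun j : Fin n => v j ≤ t)).card + 1 := by
      unfold rnk
      rw [Finset.card_filter, Fin.sum_univ_castSucc, Finset.card_filter]
      simp [hJdef, hv, ht]
    have hc : k ≤ (Finset.univ.filter (fun j => v j ≤ t)).card := by omega
    exact absurd (lt_of_lt_of_le (sInf_lt v t k hk1 hd hc) hω') (lt_irrefl _)
  -- conclusion
  have hfinal : μ (A (Fin.last n)) ≤ ENNReal.ofReal (β + 1 / (n + 1)) := by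
    have hdiv : μ (A (Fin.last n)) ≤ (k : ℝ≥0∞) / ((n:ℝ≥0∞)+1) := by
      rw [ENNReal.le_div_iff_mul_le (Or.inl (by simp)) (Or.inl (by simp))]
      exact_mod_cast hmain
    refine hdiv.trans ?_
    have h1 : ((k : ℝ≥0∞)) / ((n:ℝ≥0∞)+1) = ENNReal.ofReal ((k:ℝ) / ((n:ℝ)+1)) := by
      rw [ENNReal.ofReal_div_of_pos (by positivity)]
      congr 1
      · simp
      · rw [ENNReal.ofReal_add (by positivity) zero_le_one, ENNReal.ofReal_natCast,
          ENNReal.ofReal_one]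
    rw [h1]
    apply ENNReal.ofReal_le_ofReal
    rw [div_le_iff₀ (by positivity)]
    have hkle : (k:ℝ) ≤ β * ((n:ℝ)+1) + 1 := (Nat.ceil_lt_add_one (by positivity)).le
    calc (k:ℝ) ≤ β * ((n:ℝ)+1) + 1 := hkle
      _ = (β + 1/((n:ℝ)+1)) * ((n:ℝ)+1) := by field_simp
  calc P {ω | (V (Fin.last n) ω : EReal) ≤
        quantileE β (empE (Fin.snoc (fun i : Fin n => ((V i.castSucc ω : ℝ) : EReal)) ⊤))}
      ≤ P (J ⁻¹' (A (Fin.last n)) ∪ J ⁻¹' N) := measure_mono hEsub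
    _ ≤ P (J ⁻¹' (A (Fin.last n))) + P (J ⁻¹' N) := measure_union_le _ _
    _ = μ (A (Fin.last n)) + μ N := by
        rw [hμ, Measure.map_apply hJ (hAmeas _), Measure.map_apply hJ hNmeas]
    _ = μ (A (Fin.last n)) := by rw [hN0, add_zero]
    _ ≤ ENNReal.ofReal (β + 1 / (n + 1)) := hfinal
end

section
/- For real numbers v_1, ..., v_{n+1} and β ∈ (0,1), the event v_{n+1} ≤ Quantile(β; {v_1,...,v_n} ∪ {∞}) holds if and only if v_{n+1} ≤ Quantile(β; {v_1,...,v_{n+1}}). -/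
open MeasureTheory Set

lemma empE_apply_Iic_congr {m : ℕ} (v w : Fin m → EReal) (z : EReal)
    (h : ∀ i, (v i ≤ z ↔ w i ≤ z)) : empE v (Set.Iic z) = empE w (Set.Iic z) := by
  simp only [empE, wEmp]
  rw [Measure.finset_sum_apply, Measure.finset_sum_apply]
  refine Finset.sum_congr rfl fun i _ => ?_
  rw [Measure.smul_apply, Measure.smul_apply,
    Measure.dirac_apply' _ measurableSet_Iic, Measure.dirac_apply' _ measurableSet_Iic]
  congr 1
  simp only [Set.indicator_apply, Set.mem_Iic, h i, Pi.one_apply]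

theorem stmt2 (n : ℕ) (v : Fin (n + 1) → ℝ) (β : ℝ) (hβ : β ∈ Set.Ioo (0 : ℝ) 1) :
    ((v (Fin.last n) : EReal) ≤
        quantileE β (empE (Fin.snoc (fun i : Fin n => ((v i.castSucc : ℝ) : EReal)) ⊤))) ↔
      ((v (Fin.last n) : EReal) ≤ quantileE β (empE (fun i => ((v i : ℝ) : EReal)))) := by
  set w : EReal := (v (Fin.last n) : EReal) with hw
  have key : ∀ z : EReal, z < w →
      empE (Fin.snoc (fun i : Fin n => ((v i.castSucc : ℝ) : EReal)) ⊤) (Set.Iic z)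
        = empE (fun i => ((v i : ℝ) : EReal)) (Set.Iic z) := by
    intro z hz
    refine empE_apply_Iic_congr _ _ z fun i => ?_
    refine Fin.lastCases ?_ ?_ i
    · simp only [Fin.snoc_last]
      exact iff_of_false (fun h => absurd (lt_of_le_of_lt h hz) not_top_lt)
        (fun h => absurd (lt_of_le_of_lt h hz) (lt_irrefl _))
    · intro j
      simp [Fin.snoc_castSucc]
  unfold quantileE
  rw [le_sInf_iff, le_sInf_iff]
  constructor
  · intro h z hz
    by_contra hlt
    push_neg at hlt
    exact absurd (h z (by rwa [Set.mem_setOf_eq, key z hlt])) (not_le.mpr hlt)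
  · intro h z hz
    by_contra hlt
    push_neg at hlt
    exact absurd (h z (by rwa [Set.mem_setOf_eq, ← key z hlt])) (not_le.mpr hlt)
end
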